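/- Let F : ℝ^d → ℝ be differentiable with L-Lipschitz gradient (L > 0), attaining its infimum F* := inf F, and satisfying the Polyak–Łojasiewicz inequality with constant μ > 0: (1/2)‖∇F(x)‖² ≥ μ (F(x) − F*) for all x. Let x ∈ ℝ^d with ‖∇F(x)‖ ≤ G, let g ∈ ℝ^d satisfy ‖g − ∇F(x)‖ ≤ δ for some δ ≥ 0, let 0 < α ≤ 1/L, and set x' := x − α g. Then F(x') − F* ≤ (1 − μ α)(F(x) − F*) + 2 α δ G + (L/2) α² δ². -/

import Mathlib

set_option maxHeartbeats 1000000

open scoped RealInnerProductSpace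

/-- Descent lemma: quadratic upper bound for a function with Lipschitz gradient. -/
lemma descent_lemma {d : ℕ}
    (F : EuclideanSpace ℝ (Fin d) → ℝ) (L : ℝ) (hL : 0 < L)
    (hdiff : Differentiable ℝ F)
    (hlip : ∀ x y, ‖gradient F x - gradient F y‖ ≤ L * ‖x - y‖)
    (x v : EuclideanSpace ℝ (Fin d)) :
    F (x + v) ≤ F x + ⟪gradient F x, v⟫ + L / 2 * ‖v‖ ^ 2 := by
  set ψ : ℝ → ℝ := fun t => F (x + t • v) - t * ⟪gradient F x, v⟫ - L * t ^ 2 / 2 * ‖v‖ ^ 2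
    with hψ
  have hd : ∀ t : ℝ, HasDerivAt ψ
      (⟪gradient F (x + t • v), v⟫ - ⟪gradient F x, v⟫ - L * t * ‖v‖ ^ 2) t := by
    intro t
    have hc : HasDerivAt (fun t : ℝ => x + t • v) v t := by
      simpa using ((hasDerivAt_id t).smul_const v).const_add x
    have h1 : HasDerivAt (fun t : ℝ => F (x + t • v)) (⟪gradient F (x + t • v), v⟫) t := by
      have := ((hdiff (x + t • v)).hasGradientAt.hasFDerivAt).comp_hasDerivAt t hc
      simp at this ⊢
      exact this
    have h2 : HasDerivAt (fun t : ℝ => t * ⟪gradient F x, v⟫) (⟪gradient F x, v⟫) t := by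
      simpa using (hasDerivAt_id t).mul_const (⟪gradient F x, v⟫)
    have h3 : HasDerivAt (fun t : ℝ => L * t ^ 2 / 2 * ‖v‖ ^ 2) (L * t * ‖v‖ ^ 2) t := by
      have : HasDerivAt (fun t : ℝ => t ^ 2) (2 * t) t := by
        simpa using hasDerivAt_pow 2 t
      have := ((this.const_mul L).div_const 2).mul_const (‖v‖ ^ 2)
      exact this.congr_deriv (by ring)
    exact (h1.sub h2).sub h3
  have hanti : AntitoneOn ψ (Set.Icc 0 1) := by
    apply antitoneOn_of_deriv_nonpos (convex_Icc 0 1)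
    · exact fun t _ => (hd t).continuousAt.continuousWithinAt
    · exact fun t _ => (hd t).differentiableAt.differentiableWithinAt
    · intro t ht
      rw [interior_Icc] at ht
      rw [(hd t).deriv]
      have h1 : ⟪gradient F (x + t • v) - gradient F x, v⟫ ≤
          ‖gradient F (x + t • v) - gradient F x‖ * ‖v‖ :=
        real_inner_le_norm _ _
      have h2 : ‖gradient F (x + t • v) - gradient F x‖ ≤ L * (t * ‖v‖) := by
        have := hlip (x + t • v) x
        simpa [abs_of_pos ht.1, norm_smul] using this
      have hv : (0:ℝ) ≤ ‖v‖ := norm_nonneg v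
      have := h1.trans (by nlinarith : ‖gradient F (x + t • v) - gradient F x‖ * ‖v‖ ≤
        L * t * ‖v‖ ^ 2)
      rw [inner_sub_left] at this
      linarith
  have := hanti (Set.left_mem_Icc.2 zero_le_one) (Set.right_mem_Icc.2 zero_le_one) zero_le_one
  simp only [hψ, zero_smul, one_smul, add_zero, zero_pow, mul_zero, zero_mul, sub_zero,
    one_mul, one_pow, mul_one, zero_div] at this
  linarith

/-- One inexact gradient step under the Polyak–Łojasiewicz condition: if
`F : ℝ^d → ℝ` is differentiable with `L`-Lipschitz gradient, attains its
infimum `F*`, and satisfies the PL inequality `(1/2)‖∇F(x)‖² ≥ μ(F(x) - F*)`,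
if `‖∇F(x)‖ ≤ G`, `g` approximates `∇F(x)` up to drift `δ`, and `0 < α ≤ 1/L`,
then the step `x' = x - α g` satisfies
`F(x') - F* ≤ (1 - μα)(F(x) - F*) + 2αδG + (L/2)α²δ²`. -/
theorem pl_step_inexact_gradient {d : ℕ}
    (F : EuclideanSpace ℝ (Fin d) → ℝ) (L μ : ℝ) (hL : 0 < L) (hμ : 0 < μ)
    (hdiff : Differentiable ℝ F)
    (hlip : ∀ x y, ‖gradient F x - gradient F y‖ ≤ L * ‖x - y‖)
    (Fstar : ℝ) (hglb : IsGLB (Set.range F) Fstar) (hatt : ∃ z, F z = Fstar)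
    (hPL : ∀ z, μ * (F z - Fstar) ≤ (1 / 2) * ‖gradient F z‖ ^ 2)
    (x g : EuclideanSpace ℝ (Fin d)) (G : ℝ) (hGx : ‖gradient F x‖ ≤ G)
    (δ : ℝ) (hδ : 0 ≤ δ) (hg : ‖g - gradient F x‖ ≤ δ)
    (α : ℝ) (hα : 0 < α) (hαL : α ≤ 1 / L) :
    F (x - α • g) - Fstar ≤ (1 - μ * α) * (F x - Fstar)
      + 2 * α * δ * G + (L / 2) * α ^ 2 * δ ^ 2 := by
  set p := gradient F x with hp
  set e := g - p with he
  have hge : g = p + e := by rw [he]; abel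
  have hdesc := descent_lemma F L hL hdiff hlip x (-(α • g))
  rw [← sub_eq_add_neg] at hdesc
  have hinner : ⟪p, -(α • g)⟫ = -α * ⟪p,p⟫ - α * ⟪p,e⟫ := by
    rw [hge]
    simp [inner_add_right, inner_smul_right]
    ring
  have hnormg : ‖-(α • g)‖ ^ 2 = α ^ 2 * (⟪p,p⟫ + 2 * ⟪p,e⟫ + ⟪e,e⟫) := by
    have h0 : ‖g‖ ^ 2 = ⟪p,p⟫ + 2 * ⟪p,e⟫ + ⟪e,e⟫ := by
      rw [← real_inner_self_eq_norm_sq, hge, inner_add_add_self, real_inner_comm e p]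
      ring
    rw [norm_neg, norm_smul, mul_pow, h0, Real.norm_eq_abs, sq_abs]
  have hpp : ⟪p,p⟫ = ‖p‖ ^ 2 := real_inner_self_eq_norm_sq p
  have hee : ⟪e,e⟫ = ‖e‖ ^ 2 := real_inner_self_eq_norm_sq e
  have hpe : |⟪p,e⟫| ≤ ‖p‖ * ‖e‖ := abs_real_inner_le_norm p e
  have hne : ‖e‖ ≤ δ := hg
  have hne0 : (0:ℝ) ≤ ‖e‖ := norm_nonneg e
  have hnp0 : (0:ℝ) ≤ ‖p‖ := norm_nonneg p
  have hLα : L * α ≤ 1 := by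
    have := (le_div_iff₀ hL).1 hαL
    linarith
  have key : F (x - α • g) ≤ F x - α * ‖p‖ ^ 2 - α * ⟪p,e⟫
      + L / 2 * (α ^ 2 * (‖p‖ ^ 2 + 2 * ⟪p,e⟫ + ‖e‖ ^ 2)) := by
    rw [hinner, hnormg, hpp, hee] at hdesc
    linarith
  have hPLx := hPL x
  rw [← hp] at hPLx
  have hFx : Fstar ≤ F x := hglb.1 (Set.mem_range_self x)
  have hG0 : (0:ℝ) ≤ G := hnp0.trans hGx
  have hpeGδ : ‖p‖ * ‖e‖ ≤ G * δ := mul_le_mul hGx hne hne0 hG0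
  have habs : -⟪p,e⟫ ≤ ‖p‖ * ‖e‖ := by
    have := neg_abs_le (⟪p,e⟫); linarith [hpe]
  have habs' : ⟪p,e⟫ ≤ ‖p‖ * ‖e‖ := le_trans (le_abs_self _) hpe
  have hIterm : -(α * ⟪p,e⟫) + L / 2 * (α ^ 2 * (2 * ⟪p,e⟫)) ≤ α * (G * δ) := by
    have hc0 : 0 ≤ α * (1 - L * α) := mul_nonneg hα.le (by linarith)
    have hca : α * (1 - L * α) ≤ α := by nlinarith [mul_pos hL hα, sq_nonneg α]
    have h1 : α * (1 - L * α) * (-⟪p,e⟫) ≤ α * (1 - L * α) * (‖p‖ * ‖e‖) :=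
      mul_le_mul_of_nonneg_left habs hc0
    have h2 : α * (1 - L * α) * (‖p‖ * ‖e‖) ≤ α * (‖p‖ * ‖e‖) :=
      mul_le_mul_of_nonneg_right hca (mul_nonneg hnp0 hne0)
    have h3 : α * (‖p‖ * ‖e‖) ≤ α * (G * δ) := mul_le_mul_of_nonneg_left hpeGδ hα.le
    have h4 : -(α * ⟪p,e⟫) + L / 2 * (α ^ 2 * (2 * ⟪p,e⟫))
        = α * (1 - L * α) * (-⟪p,e⟫) := by ring
    linarith
  have hpterm : -(α * ‖p‖ ^ 2) + L / 2 * (α ^ 2 * ‖p‖ ^ 2) ≤ -(α / 2) * ‖p‖ ^ 2 := by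
    nlinarith [sq_nonneg ‖p‖, mul_nonneg hα.le (sq_nonneg ‖p‖)]
  have heterm : L / 2 * (α ^ 2 * ‖e‖ ^ 2) ≤ L / 2 * α ^ 2 * δ ^ 2 := by
    have h1 : ‖e‖ ^ 2 ≤ δ ^ 2 := by nlinarith
    have h2 := mul_le_mul_of_nonneg_left h1
      (mul_nonneg (div_nonneg hL.le (by norm_num : (0:ℝ) ≤ 2)) (sq_nonneg α))
    nlinarith [h2]
  have hPLα : -(α / 2) * ‖p‖ ^ 2 ≤ -(μ * α) * (F x - Fstar) := by
    nlinarith [hα.le]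
  have hδG : α * (G * δ) ≤ 2 * α * δ * G := by
    nlinarith [mul_nonneg (mul_nonneg hα.le hδ) hG0]
  linarith
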